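/- Suppose a POVM {Π₁*,…,Π_M*} satisfies the Holevo–Yuen–Kennedy–Lax conditions: Λ := Σᵢ pᵢτᵢΠᵢ* is Hermitian, (Λ − p_mτ_m)Π_m* = 0 and Λ − p_mτ_m ≥ 0 for all m. Then with μ₀* = Λ/tr(Λ) and t = tr(Λ), the projection {pᵢτᵢ − tμ₀* ≤ 0} equals the identity for every i, and consequently Σᵢ pᵢ tr(τᵢ{pᵢτᵢ − tμ₀* ≤ 0}) − t = 1 − Σᵢ pᵢ tr(τᵢΠᵢ*). -/

import Mathlib

open Matrix
open scoped ComplexOrder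

/-- Spectral projection of a Hermitian matrix onto the eigenspaces whose
eigenvalue satisfies the predicate `pred`. -/
noncomputable def specProj {ι : Type*} [Fintype ι] [DecidableEq ι]
    {A : Matrix ι ι ℂ} (hA : A.IsHermitian) (pred : ℝ → Prop) : Matrix ι ι ℂ :=
  letI := Classical.decPred pred
  (hA.eigenvectorUnitary : Matrix ι ι ℂ) *
    Matrix.diagonal (fun i => if pred (hA.eigenvalues i) then (1 : ℂ) else 0) *
    star (hA.eigenvectorUnitary : Matrix ι ι ℂ)

lemma eig_nonpos {ι : Type*} [Fintype ι] [DecidableEq ι] {A : Matrix ι ι ℂ}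
    (hA : A.IsHermitian) (h : (-A).PosSemidef) (j : ι) : hA.eigenvalues j ≤ 0 := by
  have h1 := h.re_dotProduct_nonneg ((WithLp.equiv 2 _) (hA.eigenvectorBasis j))
  rw [neg_mulVec, dotProduct_neg, map_neg] at h1
  rw [hA.eigenvalues_eq]
  exact neg_nonneg.mp h1

lemma specProj_eq_one {ι : Type*} [Fintype ι] [DecidableEq ι] {A : Matrix ι ι ℂ}
    (hA : A.IsHermitian) (h : ∀ j, hA.eigenvalues j ≤ 0) :
    specProj hA (fun x => x ≤ 0) = 1 := by
  unfold specProj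
  have : (Matrix.diagonal (fun i => if hA.eigenvalues i ≤ 0 then (1 : ℂ) else 0)) = 1 := by
    ext i k
    by_cases hik : i = k <;> simp [Matrix.diagonal, Matrix.one_apply, hik, h k]
  rw [this, mul_one]
  exact Matrix.mem_unitaryGroup_iff.mp hA.eigenvectorUnitary.2

/-- under the Holevo–Yuen–Kennedy–Lax optimality conditions,
with `μ₀* = Λ/tr(Λ)` and `t = tr(Λ)`, the projection
`{pᵢτᵢ − tμ₀* ≤ 0}` is the identity for every `i`, and the
information-spectrum lower bound is met with equality. -/
theorem hykl_spectrum_equality {n M : ℕ}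
    {τ : Fin M → Matrix (Fin n) (Fin n) ℂ}
    (hτ : ∀ i, (τ i).PosSemidef) (hτt : ∀ i, (τ i).trace = 1)
    {p : Fin M → ℝ} (hp : ∀ i, 0 ≤ p i) (hp1 : ∑ i, p i = 1)
    {E : Fin M → Matrix (Fin n) (Fin n) ℂ}
    (hE : ∀ i, (E i).PosSemidef) (hE1 : ∑ i, E i = 1)
    {Λ : Matrix (Fin n) (Fin n) ℂ}
    (hΛdef : Λ = ∑ i, (p i : ℂ) • (τ i * E i))
    (hΛ : Λ.IsHermitian) (hΛtr : 0 < Λ.trace.re)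
    (hopt0 : ∀ m, (Λ - (p m : ℂ) • τ m) * E m = 0)
    (hopt1 : ∀ m, (Λ - (p m : ℂ) • τ m).PosSemidef)
    (hH : ∀ i, ((p i : ℂ) • τ i - Λ.trace • (Λ.trace⁻¹ • Λ)).IsHermitian) :
    (∀ i, specProj (hH i) (fun x => x ≤ 0) = 1) ∧
    (∑ i, p i * (Matrix.trace (τ i * specProj (hH i) (fun x => x ≤ 0))).re)
        - Λ.trace.re =
      1 - ∑ i, p i * (Matrix.trace (τ i * E i)).re := by
  have htr : Λ.trace ≠ 0 := by
    intro h
    rw [h] at hΛtr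
    simp at hΛtr
  have hM : ∀ i, (p i : ℂ) • τ i - Λ.trace • (Λ.trace⁻¹ • Λ) = (p i : ℂ) • τ i - Λ := by
    intro i
    rw [smul_smul, mul_inv_cancel₀ htr, one_smul]
  have hproj : ∀ i, specProj (hH i) (fun x => x ≤ 0) = 1 := by
    intro i
    refine specProj_eq_one _ (fun j => eig_nonpos _ ?_ j)
    rw [show -((p i : ℂ) • τ i - Λ.trace • (Λ.trace⁻¹ • Λ)) = Λ - (p i : ℂ) • τ i from by
      rw [hM i, neg_sub]]
    exact hopt1 i
  refine ⟨hproj, ?_⟩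
  have h1 : (∑ i, p i * (Matrix.trace (τ i * specProj (hH i) (fun x => x ≤ 0))).re) = 1 := by
    rw [← hp1]
    refine Finset.sum_congr rfl (fun i _ => ?_)
    rw [hproj i, mul_one, hτt i]
    simp
  have h2 : Λ.trace.re = ∑ i, p i * (Matrix.trace (τ i * E i)).re := by
    rw [hΛdef, Matrix.trace_sum]
    rw [Complex.re_sum]
    refine Finset.sum_congr rfl (fun i _ => ?_)
    rw [Matrix.trace_smul]
    simp [Complex.mul_re]
  rw [h1, h2]
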